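/- arXiv:0705.0985 — 8 statements merged into one kernel-verified Lean document; each statement's English description precedes it below -/
import Mathlib

section
/- Let g be a finite-dimensional real Lie algebra with an ad-invariant inner product Q, h ⊆ g a Lie subalgebra, and m = h^⊥. Suppose there exists t > 1 such that K_t(x,y) ≥ 0 for all x, y ∈ g. Then for all x, y ∈ g with [x,y] = 0 one has [x_h, y_h] = 0, where x = x_h + x_m and y = y_h + y_m are the decompositions according to g = h ⊕ m. -/
variable {g : Type*} [LieRing g] [LieAlgebra ℝ g] [FiniteDimensional ℝ g]

/-- The unnormalized sectional curvature expression `K_t(x,y)` of the left invariant metric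
`Q_t = t Q|_h + Q|_m`, expressed via the inner product `Q` (as a bilinear form, so that
`‖z‖² = Q z z`) and the orthogonal projection `π` onto the subalgebra `h`
(so `x_h = π x` and `x_m = x - π x`). -/
noncomputable def Kcurv (Q : LinearMap.BilinForm ℝ g) (π : g →ₗ[ℝ] g)
    (t : ℝ) (x y : g) : ℝ :=
  (1/4) * Q (⁅x - π x, y - π y⁆ - π ⁅x - π x, y - π y⁆
        + t • ⁅π x, y - π y⁆ + t • ⁅x - π x, π y⁆)
      (⁅x - π x, y - π y⁆ - π ⁅x - π x, y - π y⁆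
        + t • ⁅π x, y - π y⁆ + t • ⁅x - π x, π y⁆)
    + (1/4) * t * Q ⁅π x, π y⁆ ⁅π x, π y⁆
    + (1/2) * t * (3 - 2*t) * Q ⁅π x, π y⁆ (π ⁅x - π x, y - π y⁆)
    + (1 - (3/4)*t) * Q (π ⁅x - π x, y - π y⁆) (π ⁅x - π x, y - π y⁆)

/-- If `K_t ≥ 0` for some `t > 1`, then any two commuting elements of `g` have commuting
`h`-components. -/
theorem stmt_1
    (Q : LinearMap.BilinForm ℝ g)
    (hsym : ∀ x y : g, Q x y = Q y x)
    (hpos : ∀ x : g, x ≠ 0 → 0 < Q x x)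
    (hinv : ∀ x y z : g, Q ⁅z, x⁆ y + Q x ⁅z, y⁆ = 0)
    (h : LieSubalgebra ℝ g)
    (π : g →ₗ[ℝ] g)
    (hπh : ∀ x : g, π x ∈ h)
    (hπm : ∀ x : g, ∀ w ∈ h, Q (x - π x) w = 0)
    (hK : ∃ t : ℝ, 1 < t ∧ ∀ x y : g, 0 ≤ Kcurv Q π t x y) :
    ∀ x y : g, ⁅x, y⁆ = 0 → ⁅π x, π y⁆ = 0 := by
  obtain ⟨t, ht, hKt⟩ := hK
  -- π fixes h
  have hfix : ∀ z ∈ h, π z = z := by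
    intro z hz
    by_contra hne
    have h0 : Q (z - π z) (z - π z) = 0 := hπm z (z - π z) (h.sub_mem hz (hπh z))
    have h1 : z - π z ≠ 0 := sub_ne_zero.mpr (fun e => hne e.symm)
    linarith [hpos _ h1]
  -- π kills anything orthogonal to h
  have hkill : ∀ z : g, (∀ w ∈ h, Q z w = 0) → π z = 0 := by
    intro z hz
    by_contra hne
    have h0 : Q (z - π z) (π z) = 0 := hπm z (π z) (hπh z)
    have h1 : Q z (π z) = 0 := hz _ (hπh z)
    have h2 : Q (z - π z) (π z) = Q z (π z) - Q (π z) (π z) := by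
      rw [map_sub]; simp
    have := hpos (π z) hne
    linarith
  intro x y hxy
  have hπu : π (x - π x) = 0 := hkill _ (hπm x)
  have hπv : π (y - π y) = 0 := hkill _ (hπm y)
  have hav : π ⁅π x, y - π y⁆ = 0 := by
    apply hkill
    intro w hw
    have h1 := hinv (y - π y) w (π x)
    have h2 : Q (y - π y) ⁅π x, w⁆ = 0 := hπm y _ (h.lie_mem (hπh x) hw)
    linarith
  have hub : π ⁅x - π x, π y⁆ = 0 := by
    apply hkill
    intro w hw
    have h1 := hinv (x - π x) w (π y)
    have h2 : Q (x - π x) ⁅π y, w⁆ = 0 := hπm x _ (h.lie_mem (hπh y) hw)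
    have h3 : ⁅x - π x, π y⁆ = -⁅π y, x - π x⁆ := (lie_skew _ _).symm
    rw [h3, map_neg]
    simp only [LinearMap.neg_apply]
    linarith
  have hc : π ⁅π x, π y⁆ = ⁅π x, π y⁆ := hfix _ (h.lie_mem (hπh x) (hπh y))
  have hsum : ⁅π x, π y⁆ + ⁅π x, y - π y⁆ + ⁅x - π x, π y⁆ + ⁅x - π x, y - π y⁆ = 0 := by
    have hx : π x + (x - π x) = x := by abel
    have hy : π y + (y - π y) = y := by abel
    calc ⁅π x, π y⁆ + ⁅π x, y - π y⁆ + ⁅x - π x, π y⁆ + ⁅x - π x, y - π y⁆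
        = ⁅π x + (x - π x), π y + (y - π y)⁆ := by
          rw [add_lie, lie_add, lie_add]; abel
      _ = ⁅x, y⁆ := by rw [hx, hy]
      _ = 0 := hxy
  have hπuv : π ⁅x - π x, y - π y⁆ = -⁅π x, π y⁆ := by
    have := congrArg π hsum
    rw [map_add, map_add, map_add, map_zero, hc, hav, hub] at this
    rw [eq_neg_iff_add_eq_zero, add_comm]
    simpa using this
  -- evaluate the curvature at (πx + t•(x-πx), πy + t•(y-πy))
  have hπx' : π (π x + t • (x - π x)) = π x := by
    rw [map_add, map_smul, hπu, hfix _ (hπh x), smul_zero, add_zero]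
  have hπy' : π (π y + t • (y - π y)) = π y := by
    rw [map_add, map_smul, hπv, hfix _ (hπh y), smul_zero, add_zero]
  have hmx' : π x + t • (x - π x) - π x = t • (x - π x) := by abel
  have hmy' : π y + t • (y - π y) - π y = t • (y - π y) := by abel
  have hbr : ⁅t • (x - π x), t • (y - π y)⁆ = (t*t) • ⁅x - π x, y - π y⁆ := by
    rw [smul_lie, lie_smul, smul_smul]
  have hπbr : π ((t*t) • ⁅x - π x, y - π y⁆) = (t*t) • (-⁅π x, π y⁆) := by
    rw [map_smul, hπuv]
  have harg1 : (t*t) • ⁅x - π x, y - π y⁆ - (t*t) • (-⁅π x, π y⁆)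
      + t • ⁅π x, t • (y - π y)⁆ + t • ⁅t • (x - π x), π y⁆ = 0 := by
    rw [lie_smul, smul_lie, smul_smul, smul_smul]
    have e : (t*t) • ⁅x - π x, y - π y⁆ - (t*t) • (-⁅π x, π y⁆)
        + (t*t) • ⁅π x, y - π y⁆ + (t*t) • ⁅x - π x, π y⁆
        = (t*t) • (⁅π x, π y⁆ + ⁅π x, y - π y⁆ + ⁅x - π x, π y⁆
            + ⁅x - π x, y - π y⁆) := by
      rw [smul_add, smul_add, smul_add, smul_neg]; abel
    rw [e, hsum, smul_zero]
  have hKeq : Kcurv Q π t (π x + t • (x - π x)) (π y + t • (y - π y))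
      = (1/4*t - 1/2*t*(3-2*t)*(t*t) + (1-(3/4)*t)*((t*t)*(t*t)))
          * Q ⁅π x, π y⁆ ⁅π x, π y⁆ := by
    unfold Kcurv
    rw [hπx', hπy', hmx', hmy', hbr, hπbr, harg1]
    simp only [map_zero, map_smul, map_neg, LinearMap.zero_apply, LinearMap.smul_apply,
      LinearMap.neg_apply, smul_eq_mul, mul_zero]
    ring
  have h0 := hKt (π x + t • (x - π x)) (π y + t • (y - π y))
  rw [hKeq] at h0
  by_contra hne
  have hp := hpos _ hne
  have hC : (1/4*t - 1/2*t*(3-2*t)*(t*t) + (1-(3/4)*t)*((t*t)*(t*t))) < 0 := by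
    have e : (1/4*t - 1/2*t*(3-2*t)*(t*t) + (1-(3/4)*t)*((t*t)*(t*t)))
        = -(t/4) * ((t-1)^3 * (3*t+1)) := by ring
    rw [e]
    have h1 : (0:ℝ) < t - 1 := by linarith
    have h2 : (0:ℝ) < (t-1)^3 := pow_pos h1 3
    have h3 : (0:ℝ) < 3*t+1 := by linarith
    nlinarith
  nlinarith [mul_neg_of_neg_of_pos hC hp]
end

section
/- Let g be a finite-dimensional real Lie algebra with an ad-invariant inner product Q, h ⊆ g a Lie subalgebra, and m = h^⊥. Let t > 0 and x, y ∈ g, and set x^t := t x_h + x_m, y^t := t y_h + y_m. If [x^t, y^t] = 0, then K_t(x,y) = −(1/4) t (t − 1)³ (1 + 3t) ‖[x_h, y_h]‖². -/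
variable {g : Type*} [LieRing g] [LieAlgebra ℝ g] [FiniteDimensional ℝ g]

/-- If `⁅x^t, y^t⁆ = 0` then `K_t(x,y) = -(1/4) t (t-1)³ (1+3t) ‖[x_h,y_h]‖²`. -/
theorem stmt_3
    (Q : LinearMap.BilinForm ℝ g)
    (hsym : ∀ x y : g, Q x y = Q y x)
    (hpos : ∀ x : g, x ≠ 0 → 0 < Q x x)
    (hinv : ∀ x y z : g, Q ⁅z, x⁆ y + Q x ⁅z, y⁆ = 0)
    (h : LieSubalgebra ℝ g)
    (π : g →ₗ[ℝ] g)
    (hπh : ∀ x : g, π x ∈ h)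
    (hπm : ∀ x : g, ∀ w ∈ h, Q (x - π x) w = 0)
    (t : ℝ) (ht : 0 < t) (x y : g)
    (hc : ⁅t • π x + (x - π x), t • π y + (y - π y)⁆ = 0) :
    Kcurv Q π t x y
      = -(1/4) * t * (t - 1) ^ 3 * (1 + 3 * t) * Q ⁅π x, π y⁆ ⁅π x, π y⁆ := by
  unfold Kcurv
  set a := ⁅π x, π y⁆ with ha
  set c := ⁅x - π x, y - π y⁆ with hcdef
  set b := ⁅π x, y - π y⁆ + ⁅x - π x, π y⁆ with hb
  have hzero : ∀ v : g, Q v v = 0 → v = 0 := by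
    intro v hv
    by_contra hne
    exact (hpos v hne).ne' hv
  -- π fixes h
  have hfix : ∀ v ∈ h, π v = v := by
    intro v hv
    have h1 : Q (v - π v) (v - π v) = 0 := hπm v _ (sub_mem hv (hπh v))
    have := hzero _ h1
    have := sub_eq_zero.mp this
    exact this.symm
  -- b is orthogonal to h
  have hQb : ∀ w ∈ h, Q b w = 0 := by
    intro w hw
    have h1 : Q ⁅π x, y - π y⁆ w = 0 := by
      have h2 := hinv (y - π y) w (π x)
      have h3 : Q (y - π y) ⁅π x, w⁆ = 0 := hπm y _ (h.lie_mem (hπh x) hw)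
      linarith
    have h2 : Q ⁅x - π x, π y⁆ w = 0 := by
      have h4 : ⁅x - π x, π y⁆ = -⁅π y, x - π x⁆ := (lie_skew _ _).symm
      have h5 := hinv (x - π x) w (π y)
      have h6 : Q (x - π x) ⁅π y, w⁆ = 0 := hπm x _ (h.lie_mem (hπh y) hw)
      rw [h4, map_neg, LinearMap.neg_apply]
      linarith
    rw [hb, map_add, LinearMap.add_apply, h1, h2, add_zero]
  have hπb : π b = 0 := by
    apply hzero
    have h1 : Q (b - π b) (π b) = 0 := hπm b _ (hπh b)
    have h2 : Q b (π b) = 0 := hQb _ (hπh b)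
    rw [map_sub, LinearMap.sub_apply] at h1
    linarith
  have hc' : (t * t) • a + t • b + c = 0 := by
    have h0 := hc
    simp only [add_lie, lie_add, smul_lie, lie_smul, smul_smul] at h0
    rw [ha, hb, hcdef]
    linear_combination (norm := module) h0
  have hceq : c = -((t * t) • a) - t • b := by
    linear_combination (norm := module) hc'
  have hπc : π c = -((t * t) • a) := by
    rw [hceq, map_sub, map_neg, map_smul, map_smul, hπb, smul_zero, sub_zero,
      hfix a (h.lie_mem (hπh x) (hπh y))]
  have hE : c - π c + t • ⁅π x, y - π y⁆ + t • ⁅x - π x, π y⁆ = 0 := by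
    rw [hπc]
    linear_combination (norm := module) hceq
  rw [hE, hπc]
  simp only [map_zero, LinearMap.zero_apply, map_neg, map_smul, LinearMap.neg_apply,
    LinearMap.smul_apply, smul_eq_mul]
  ring
end

section
/- Let g be a finite-dimensional real Lie algebra with an ad-invariant inner product Q, h ⊆ g a Lie subalgebra, and m = h^⊥. Then for every t with 0 < t ≤ 1 and all x, y ∈ g one has K_t(x,y) ≥ 0. -/
variable {g : Type*} [LieRing g] [LieAlgebra ℝ g] [FiniteDimensional ℝ g]

omit [FiniteDimensional ℝ g] in
/-- Completing the square in the quadratic part of `Kcurv`. -/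
lemma quad_complete (Q : LinearMap.BilinForm ℝ g)
    (hsym : ∀ x y : g, Q x y = Q y x) (t : ℝ) (b c : g) :
    (1/4) * t * Q b b + (1/2) * t * (3 - 2*t) * Q b c + (1 - (3/4)*t) * Q c c
      = (t/4) * Q (b + (3 - 2*t) • c) (b + (3 - 2*t) • c) + (1 - t)^3 * Q c c := by
  have expand : Q (b + (3 - 2*t) • c) (b + (3 - 2*t) • c)
      = Q b b + 2*(3 - 2*t) * Q b c + (3 - 2*t)^2 * Q c c := by
    simp only [map_add, map_smul, LinearMap.add_apply, LinearMap.smul_apply,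
      smul_eq_mul, hsym c b]
    ring
  rw [expand]; ring

/-- For `0 < t ≤ 1` the metric `Q_t` has non-negative sectional curvature. -/
theorem stmt_4
    (Q : LinearMap.BilinForm ℝ g)
    (hsym : ∀ x y : g, Q x y = Q y x)
    (hpos : ∀ x : g, x ≠ 0 → 0 < Q x x)
    (hinv : ∀ x y z : g, Q ⁅z, x⁆ y + Q x ⁅z, y⁆ = 0)
    (h : LieSubalgebra ℝ g)
    (π : g →ₗ[ℝ] g)
    (hπh : ∀ x : g, π x ∈ h)
    (hπm : ∀ x : g, ∀ w ∈ h, Q (x - π x) w = 0) :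
    ∀ t : ℝ, 0 < t → t ≤ 1 → ∀ x y : g, 0 ≤ Kcurv Q π t x y := by
  have hPSD : ∀ z : g, 0 ≤ Q z z := by
    intro z
    by_cases hz : z = 0
    · simp [hz]
    · exact (hpos z hz).le
  intro t ht ht1 x y
  have key : Kcurv Q π t x y
      = (1/4) * Q (⁅x - π x, y - π y⁆ - π ⁅x - π x, y - π y⁆
            + t • ⁅π x, y - π y⁆ + t • ⁅x - π x, π y⁆)
          (⁅x - π x, y - π y⁆ - π ⁅x - π x, y - π y⁆
            + t • ⁅π x, y - π y⁆ + t • ⁅x - π x, π y⁆)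
        + (t/4) * Q (⁅π x, π y⁆ + (3 - 2*t) • π ⁅x - π x, y - π y⁆)
            (⁅π x, π y⁆ + (3 - 2*t) • π ⁅x - π x, y - π y⁆)
        + (1 - t)^3 * Q (π ⁅x - π x, y - π y⁆) (π ⁅x - π x, y - π y⁆) := by
    have q := quad_complete Q hsym t ⁅π x, π y⁆ (π ⁅x - π x, y - π y⁆)
    rw [Kcurv]
    linarith [q]
  rw [key]
  have h1 := hPSD (⁅x - π x, y - π y⁆ - π ⁅x - π x, y - π y⁆
            + t • ⁅π x, y - π y⁆ + t • ⁅x - π x, π y⁆)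
  have h2 := hPSD (⁅π x, π y⁆ + (3 - 2*t) • π ⁅x - π x, y - π y⁆)
  have h3 := hPSD (π ⁅x - π x, y - π y⁆)
  have h4 : (0:ℝ) ≤ (1 - t)^3 := pow_nonneg (by linarith) 3
  have t1 : 0 ≤ (t/4) * Q (⁅π x, π y⁆ + (3 - 2*t) • π ⁅x - π x, y - π y⁆)
      (⁅π x, π y⁆ + (3 - 2*t) • π ⁅x - π x, y - π y⁆) :=
    mul_nonneg (by linarith) h2
  have t2 : 0 ≤ (1 - t)^3 * Q (π ⁅x - π x, y - π y⁆) (π ⁅x - π x, y - π y⁆) :=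
    mul_nonneg h4 h3
  linarith
end

section
/- Let g be a finite-dimensional real Lie algebra with an ad-invariant inner product Q, h ⊆ g a simple Lie subalgebra, and m = h^⊥. Suppose that all x, y ∈ g with [x,y] = 0 satisfy [x_h, y_h] = 0. If y ∈ m is such that there exists a nonzero x ∈ h with [x, y] = 0, then [h', y] = 0 for all h' ∈ h. -/
open NormedSpace
set_option synthInstance.maxHeartbeats 1000000
set_option maxHeartbeats 2000000
set_option linter.unusedSectionVars false

section AnalyticAux

variable {E : Type*} [NormedAddCommGroup E] [NormedSpace ℝ E] [CompleteSpace E]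

lemma expDeriv (A : E →L[ℝ] E) (x : E) (s : ℝ) :
    HasDerivAt (fun s : ℝ => exp (s • A) x) ((exp (s • A) * A) x) s := by
  simpa using (hasDerivAt_exp_smul_const A s).clm_apply (hasDerivAt_const s x)

lemma commute_exp (A : E →L[ℝ] E) (s : ℝ) : A * exp (s • A) = exp (s • A) * A := by
  have h : Commute A (s • A) := by
    unfold Commute SemiconjBy
    rw [mul_smul_comm, smul_mul_assoc]
  exact h.exp_right.eq

lemma exp_bracket (B : E →L[ℝ] E →L[ℝ] E) (A : E →L[ℝ] E)
    (hA : ∀ a b, A (B a b) = B (A a) b + B a (A b)) (a b : E) (s : ℝ) :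
    exp (s • A) (B a b) = B (exp (s • A) a) (exp (s • A) b) := by
  set G : ℝ → E := fun s => exp (s • (-A)) (B (exp (s • A) a) (exp (s • A) b)) with hG
  have hGd : ∀ s : ℝ, HasDerivAt G 0 s := by
    intro s
    have hf : HasDerivAt (fun s : ℝ => exp (s • A) a) ((exp (s • A) * A) a) s := expDeriv A a s
    have hg : HasDerivAt (fun s : ℝ => exp (s • A) b) ((exp (s • A) * A) b) s := expDeriv A b s
    have hc : HasDerivAt (fun s : ℝ => B (exp (s • A) a)) (B ((exp (s • A) * A) a)) s :=
      B.hasFDerivAt.comp_hasDerivAt s hf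
    have hz : HasDerivAt (fun s : ℝ => B (exp (s • A) a) (exp (s • A) b))
        (B ((exp (s • A) * A) a) (exp (s • A) b)
          + B (exp (s • A) a) ((exp (s • A) * A) b)) s :=
      hc.clm_apply hg
    have hout : HasDerivAt (fun s : ℝ => exp (s • (-A))) (exp (s • (-A)) * (-A)) s :=
      hasDerivAt_exp_smul_const (-A) s
    have h2 := hout.clm_apply hz
    have key : B ((exp (s • A) * A) a) (exp (s • A) b)
          + B (exp (s • A) a) ((exp (s • A) * A) b)
        = A (B (exp (s • A) a) (exp (s • A) b)) := by
      rw [hA, ← commute_exp]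
      rfl
    rw [key] at h2
    have hzero : (exp (s • (-A)) * (-A)) (B (exp (s • A) a) (exp (s • A) b))
        + exp (s • (-A)) (A (B (exp (s • A) a) (exp (s • A) b))) = 0 := by
      rw [ContinuousLinearMap.mul_apply, ContinuousLinearMap.neg_apply, map_neg]
      exact neg_add_cancel _
    rw [hzero] at h2
    exact h2
  have hconst : G s = G 0 :=
    is_const_of_deriv_eq_zero (fun t => (hGd t).differentiableAt) (fun t => (hGd t).deriv) s 0
  have h0 : G 0 = B a b := by simp [hG]
  have hGs : exp (s • (-A)) (B (exp (s • A) a) (exp (s • A) b)) = B a b := hconst.trans h0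
  have hinv : exp (s • A) * exp (s • (-A)) = 1 := by
    rw [smul_neg, ← NormedSpace.exp_add_of_commute_of_mem_ball (𝕂 := ℝ) (Commute.neg_right (Commute.refl _))
      ((NormedSpace.expSeries_radius_eq_top ℝ (E →L[ℝ] E)).symm ▸ edist_lt_top _ _)
      ((NormedSpace.expSeries_radius_eq_top ℝ (E →L[ℝ] E)).symm ▸ edist_lt_top _ _)]
    simp
  calc exp (s • A) (B a b)
      = exp (s • A) (exp (s • (-A)) (B (exp (s • A) a) (exp (s • A) b))) := by rw [hGs]
    _ = (exp (s • A) * exp (s • (-A))) (B (exp (s • A) a) (exp (s • A) b)) := rfl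
    _ = _ := by rw [hinv]; rfl

lemma key_deriv (B : E →L[ℝ] E →L[ℝ] E) (P A : E →L[ℝ] E) (a b : E)
    (h : ∀ s : ℝ, B (P (exp (s • A) a)) (P (exp (s • A) b)) = 0) :
    B (P (A a)) (P b) + B (P a) (P (A b)) = 0 := by
  have hf : HasDerivAt (fun s : ℝ => P (exp (s • A) a)) (P ((exp ((0:ℝ) • A) * A) a)) 0 :=
    P.hasFDerivAt.comp_hasDerivAt 0 (expDeriv A a 0)
  have hg : HasDerivAt (fun s : ℝ => P (exp (s • A) b)) (P ((exp ((0:ℝ) • A) * A) b)) 0 :=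
    P.hasFDerivAt.comp_hasDerivAt 0 (expDeriv A b 0)
  have hc : HasDerivAt (fun s : ℝ => B (P (exp (s • A) a))) (B (P ((exp ((0:ℝ) • A) * A) a))) 0 :=
    B.hasFDerivAt.comp_hasDerivAt 0 hf
  have hF := hc.clm_apply hg
  have hzero : HasDerivAt (fun s : ℝ => B (P (exp (s • A) a)) (P (exp (s • A) b))) 0 0 := by
    have : (fun s : ℝ => B (P (exp (s • A) a)) (P (exp (s • A) b))) = fun _ => (0:E) := funext h
    rw [this]
    exact hasDerivAt_const 0 0
  have := hF.unique hzero
  simpa [zero_smul, NormedSpace.exp_zero] using this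

end AnalyticAux

lemma bracket_deriv_aux {g : Type*} [LieRing g] [LieAlgebra ℝ g] [FiniteDimensional ℝ g]
    (π : g →ₗ[ℝ] g)
    (hcomm : ∀ x y : g, ⁅x, y⁆ = 0 → ⁅π x, π y⁆ = 0)
    (w y v : g) (hwy : ⁅w, y⁆ = 0) :
    ⁅π ⁅v, w⁆, π y⁆ + ⁅π w, π ⁅v, y⁆⁆ = 0 := by
  set E := Fin (Module.finrank ℝ g) → ℝ with hE
  let e : g ≃ₗ[ℝ] E := (Module.finBasis ℝ g).equivFun
  let Bl : E →ₗ[ℝ] E →ₗ[ℝ] E := LinearMap.mk₂ ℝ (fun a b => e ⁅e.symm a, e.symm b⁆)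
    (fun a a' b => by simp [add_lie]) (fun c a b => by simp [smul_lie])
    (fun a b b' => by simp [lie_add]) (fun c a b => by simp [lie_smul])
  let B : E →L[ℝ] E →L[ℝ] E :=
    LinearMap.toContinuousLinearMap
      ((LinearMap.toContinuousLinearMap :
        (E →ₗ[ℝ] E) ≃ₗ[ℝ] (E →L[ℝ] E)).toLinearMap ∘ₗ Bl)
  have hB : ∀ a b : E, B a b = e ⁅e.symm a, e.symm b⁆ := fun a b => by
    simp [B, Bl]
  let A : E →L[ℝ] E :=
    LinearMap.toContinuousLinearMap
      (e.toLinearMap ∘ₗ (LieAlgebra.ad ℝ g v : g →ₗ[ℝ] g) ∘ₗ e.symm.toLinearMap)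
  have hAap : ∀ a : E, A a = e ⁅v, e.symm a⁆ := fun a => by
    simp [A, LieAlgebra.ad_apply]
  let P : E →L[ℝ] E :=
    LinearMap.toContinuousLinearMap (e.toLinearMap ∘ₗ π ∘ₗ e.symm.toLinearMap)
  have hPap : ∀ a : E, P a = e (π (e.symm a)) := fun a => by simp [P]
  have hA : ∀ a b : E, A (B a b) = B (A a) b + B a (A b) := by
    intro a b
    rw [hB, hAap, hB, hB, hAap, hAap]
    simp only [LinearEquiv.symm_apply_apply]
    rw [← map_add]
    congr 1
    exact leibniz_lie v (e.symm a) (e.symm b)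
  have hzero : ∀ s : ℝ, B (P (exp (s • A) (e w))) (P (exp (s • A) (e y))) = 0 := by
    intro s
    have h1 : B (exp (s • A) (e w)) (exp (s • A) (e y)) = 0 := by
      rw [← exp_bracket B A hA, hB]
      simp only [LinearEquiv.symm_apply_apply, hwy]
      simp
    have h2 : ⁅e.symm (exp (s • A) (e w)), e.symm (exp (s • A) (e y))⁆ = 0 := by
      have := congrArg e.symm (hB (exp (s • A) (e w)) (exp (s • A) (e y)))
      rw [h1] at this
      simpa using this.symm
    have h3 := hcomm _ _ h2
    rw [hB, hPap, hPap]
    simp only [LinearEquiv.symm_apply_apply]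
    rw [h3, map_zero]
  have hk := key_deriv B P A (e w) (e y) hzero
  rw [hB, hB, hAap, hAap, hPap, hPap, hPap, hPap] at hk
  simp only [LinearEquiv.symm_apply_apply] at hk
  rw [← map_add] at hk
  exact (LinearEquiv.map_eq_zero_iff e).mp hk


variable {g : Type*} [LieRing g] [LieAlgebra ℝ g] [FiniteDimensional ℝ g]

/-- Step 1: if `h` is simple and `y ∈ m` commutes with some nonzero `x ∈ h`, then `y`
commutes with all of `h`. -/
theorem stmt_6
    (Q : LinearMap.BilinForm ℝ g)
    (hsym : ∀ x y : g, Q x y = Q y x)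
    (hpos : ∀ x : g, x ≠ 0 → 0 < Q x x)
    (hinv : ∀ x y z : g, Q ⁅z, x⁆ y + Q x ⁅z, y⁆ = 0)
    (h : LieSubalgebra ℝ g)
    (π : g →ₗ[ℝ] g)
    (hπh : ∀ x : g, π x ∈ h)
    (hπm : ∀ x : g, ∀ w ∈ h, Q (x - π x) w = 0)
    (hsimple : LieAlgebra.IsSimple ℝ h)
    (hcomm : ∀ x y : g, ⁅x, y⁆ = 0 → ⁅π x, π y⁆ = 0)
    (y : g) (hym : ∀ w ∈ h, Q y w = 0)
    (x : g) (hxh : x ∈ h) (hx0 : x ≠ 0) (hxy : ⁅x, y⁆ = 0) :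
    ∀ h' ∈ h, ⁅h', y⁆ = 0 := by
  have hQzero : ∀ z : g, Q z z = 0 → z = 0 := by
    intro z hz
    by_contra h0
    exact absurd hz (ne_of_gt (hpos z h0))
  have hproj_self : ∀ w ∈ h, π w = w := by
    intro w hw
    have hz : w - π w ∈ h := sub_mem hw (hπh w)
    have h1 : Q (w - π w) (w - π w) = 0 := hπm w _ hz
    have h2 := hQzero _ h1
    rw [sub_eq_zero] at h2
    exact h2.symm
  have hπy : π y = 0 := by
    apply hQzero
    have h1 : Q (y - π y) (π y) = 0 := hπm y (π y) (hπh y)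
    have h2 : Q y (π y) = 0 := hym _ (hπh y)
    rw [map_sub, LinearMap.sub_apply, h2, zero_sub, neg_eq_zero] at h1
    exact h1
  -- (*) : key consequence of hcomm via differentiation
  have star : ∀ w ∈ h, ⁅w, y⁆ = 0 → ∀ v : g, ⁅w, π ⁅v, y⁆⁆ = 0 := by
    intro w hw hwy v
    have h1 := bracket_deriv_aux π hcomm w y v hwy
    rw [hπy, lie_zero, zero_add, hproj_self w hw] at h1
    exact h1
  -- membership characterization
  have hchar : ∀ u' ∈ h, (∀ v : g, Q u' (π ⁅v, y⁆) = 0) → ⁅u', y⁆ = 0 := by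
    intro u' hu' hQv
    apply hQzero
    set v := ⁅u', y⁆ with hv
    have e1 : Q ⁅u', y⁆ v + Q y ⁅u', v⁆ = 0 := hinv y v u'
    have e2 : Q ⁅v, y⁆ u' + Q y ⁅v, u'⁆ = 0 := hinv y u' v
    have e3 : Q ⁅v, y⁆ u' = Q (π ⁅v, y⁆) u' := by
      have := hπm ⁅v, y⁆ u' hu'
      rw [map_sub, LinearMap.sub_apply, sub_eq_zero] at this
      exact this
    have e4 : Q (π ⁅v, y⁆) u' = 0 := by rw [hsym]; exact hQv v
    have e5 : Q y ⁅v, u'⁆ = -Q y ⁅u', v⁆ := by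
      rw [← lie_skew u' v, map_neg]; simp
    rw [e3, e4, e5] at e2
    -- e2 : 0 + -Q y ⁅u',v⁆ = 0
    have e6 : Q y ⁅u', v⁆ = 0 := by linarith
    rw [e6, add_zero] at e1
    exact e1
  -- the centralizer ideal
  let K : LieIdeal ℝ h :=
    { carrier := {w : h | ⁅(w : g), y⁆ = 0}
      add_mem' := by
        intro a b ha hb
        simp only [Set.mem_setOf_eq] at *
        have hco : ((a + b : h) : g) = (a : g) + (b : g) := rfl
        rw [hco, add_lie, ha, hb, add_zero]
      zero_mem' := by simp
      smul_mem' := by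
        intro c a ha
        simp only [Set.mem_setOf_eq] at *
        have hco : ((c • a : h) : g) = c • (a : g) := rfl
        rw [hco, smul_lie, ha, smul_zero]
      lie_mem := by
        intro u w hw
        simp only [Set.mem_setOf_eq] at *
        have hcoe : ((⁅u, w⁆ : h) : g) = ⁅(u : g), (w : g)⁆ := rfl
        rw [hcoe]
        apply hchar _ (h.lie_mem u.2 w.2)
        intro v
        have c1 : Q ⁅(w : g), (u : g)⁆ (π ⁅v, y⁆) + Q (u : g) ⁅(w : g), π ⁅v, y⁆⁆ = 0 :=
          hinv u (π ⁅v, y⁆) w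
        rw [star (w : g) w.2 hw v, map_zero, add_zero] at c1
        have c2 : Q ⁅(u : g), (w : g)⁆ (π ⁅v, y⁆) = -Q ⁅(w : g), (u : g)⁆ (π ⁅v, y⁆) := by
          rw [← lie_skew, map_neg, LinearMap.neg_apply]
        rw [c2, c1, neg_zero] }
  have hxK : (⟨x, hxh⟩ : h) ∈ K := hxy
  have hKtop : K = ⊤ := by
    rcases hsimple.eq_bot_or_eq_top K with hbot | htop
    · exfalso
      rw [hbot] at hxK
      rw [LieSubmodule.mem_bot] at hxK
      apply hx0
      exact congrArg Subtype.val hxK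
    · exact htop
  intro h' hh'
  have : (⟨h', hh'⟩ : h) ∈ K := hKtop ▸ LieSubmodule.mem_top _
  exact this
end

section
/- Let g be a finite-dimensional real Lie algebra with an ad-invariant inner product Q, h ⊆ g a Lie subalgebra, and m = h^⊥. Suppose that all u, v ∈ g with [u,v] = 0 satisfy [u_h, v_h] = 0. If x ∈ h and y ∈ m satisfy [x,y] = 0, then [[x, h'], y] = 0 for all h' ∈ h. -/
variable {g : Type*} [LieRing g] [LieAlgebra ℝ g] [FiniteDimensional ℝ g]

-- Key lemma: exp of inner derivations gives curves of commuting pairs; differentiating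
-- the projected commutation relation yields `⁅x, π ⁅μ, y⁆⁆ = 0` for every `μ`.
open NormedSpace in
theorem key_bracket {g : Type*} [LieRing g] [LieAlgebra ℝ g] [FiniteDimensional ℝ g]
    (π : g →ₗ[ℝ] g)
    (hcomm : ∀ u v : g, ⁅u, v⁆ = 0 → ⁅π u, π v⁆ = 0)
    (x y : g) (hxy : ⁅x, y⁆ = 0) (hπx : π x = x) (hπy : π y = 0)
    (μ : g) : ⁅x, π ⁅μ, y⁆⁆ = 0 := by
  classical
  set V := Fin (Module.finrank ℝ g) → ℝ with hV
  let e : g ≃ₗ[ℝ] V := (Module.finBasis ℝ g).equivFun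
  -- the transported adjoint map
  let D : V →L[ℝ] V := LinearMap.toContinuousLinearMap (e.conj (LieAlgebra.ad ℝ g μ))
  have hD : ∀ v : V, D v = e ⁅μ, e.symm v⁆ := by
    intro v
    simp [D, LinearMap.coe_toContinuousLinearMap', LinearEquiv.conj_apply,
      LieAlgebra.ad_apply]
  -- the transported bracket as a continuous bilinear map
  let B₀ : V →ₗ[ℝ] V →ₗ[ℝ] V :=
    LinearMap.mk₂ ℝ (fun a b => e ⁅e.symm a, e.symm b⁆)
      (by intros; simp [map_add, add_lie])
      (by intros; simp [map_smul, smul_lie])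
      (by intros; simp [map_add, lie_add])
      (by intros; simp [map_smul, lie_smul])
  let β : V →L[ℝ] V →L[ℝ] V :=
    LinearMap.toContinuousLinearMap
      (((LinearMap.toContinuousLinearMap :
          (V →ₗ[ℝ] V) ≃ₗ[ℝ] (V →L[ℝ] V)) : (V →ₗ[ℝ] V) →ₗ[ℝ] (V →L[ℝ] V)).comp B₀)
  have hβ : ∀ a b : V, β a b = e ⁅e.symm a, e.symm b⁆ := by
    intro a b
    simp [β, B₀, LinearMap.coe_toContinuousLinearMap']
  -- D is a derivation of β
  have hDβ : ∀ a b : V, D (β a b) = β (D a) b + β a (D b) := by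
    intro a b
    rw [hD, hβ, hβ, hβ, hD, hD, ← map_add, e.symm_apply_apply, e.symm_apply_apply,
      e.symm_apply_apply, ← leibniz_lie]
  -- the one-parameter family
  set ψ : ℝ → (V →L[ℝ] V) := fun t => exp (t • D) with hψ
  have hψd : ∀ t : ℝ, HasDerivAt ψ (ψ t * D) t := fun t => hasDerivAt_exp_smul_const D t
  have hψD : ∀ t : ℝ, D * ψ t = ψ t * D := fun t =>
    (((Commute.refl D).smul_right t).exp_right)
  have hψcomm : ∀ (t : ℝ) (c : V), D (ψ t c) = ψ t (D c) := by
    intro t c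
    have := congrFun (congrArg (fun (f : V →L[ℝ] V) => (f : V → V)) (hψD t)) c
    simpa using this
  have hψ0 : ∀ c : V, ψ 0 c = c := by
    intro c
    simp [hψ, zero_smul, exp_zero]
  have hψinv : ∀ t : ℝ, ψ t * ψ (-t) = 1 := by
    intro t
    rw [hψ]
    let +nondep : NormedAlgebra ℚ (V →L[ℝ] V) := .restrictScalars ℚ ℝ _
    rw [← exp_add_of_commute (((Commute.refl D).smul_left t).smul_right (-t))]
    rw [← add_smul, add_neg_cancel, zero_smul, exp_zero]
  have hcurve : ∀ (t : ℝ) (a : V), HasDerivAt (fun s => ψ s a) (ψ t (D a)) t := by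
    intro t a
    have := (hψd t).clm_apply (hasDerivAt_const t a)
    simpa using this
  have hbil : ∀ {u v : ℝ → V} {u' v' : V} {t : ℝ}, HasDerivAt u u' t → HasDerivAt v v' t →
      HasDerivAt (fun s => β (u s) (v s)) (β u' (v t) + β (u t) v') t := by
    intro u v u' v' t hu hv
    have h1 : HasDerivAt (fun s => β (u s)) (β u') t :=
      β.hasFDerivAt.comp_hasDerivAt t hu
    exact h1.clm_apply hv
  -- exp of a derivation is an automorphism
  have haut : ∀ (t : ℝ) (a b : V), β (ψ t a) (ψ t b) = ψ t (β a b) := by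
    intro t a b
    set H : ℝ → V := fun s => ψ (-s) (β (ψ s a) (ψ s b)) with hH
    have hHd : ∀ s : ℝ, HasDerivAt H 0 s := by
      intro s
      have hw := hbil (hcurve s a) (hcurve s b)
      have h2 : HasDerivAt (fun r : ℝ => ψ (-r)) ((-1 : ℝ) • (ψ (-s) * D)) s :=
        (hψd (-s)).scomp s (hasDerivAt_neg s)
      have h3 := h2.clm_apply hw
      refine h3.congr_deriv ?_
      rw [ContinuousLinearMap.smul_apply]
      simp only [neg_smul, one_smul, ContinuousLinearMap.neg_apply,
        ContinuousLinearMap.mul_apply]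
      rw [← hψcomm, ← hψcomm, ← hψcomm, ← hDβ]
      simp [ContinuousLinearMap.smul_apply, ContinuousLinearMap.mul_apply, hψcomm]
    have hconst : H t = H 0 := by
      apply is_const_of_deriv_eq_zero
      · exact fun s => (hHd s).differentiableAt
      · exact fun s => (hHd s).deriv
    have hH0 : H 0 = β a b := by
      simp only [hH, neg_zero]
      rw [hψ0, hψ0, hψ0]
    have : ψ t (H t) = ψ t (β a b) := by rw [hconst, hH0]
    rw [hH] at this
    have happ : ψ t (ψ (-t) (β (ψ t a) (ψ t b))) = β (ψ t a) (ψ t b) := by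
      have := congrFun (congrArg (fun (f : V →L[ℝ] V) => (f : V → V)) (hψinv t))
        (β (ψ t a) (ψ t b))
      simpa using this
    rw [happ] at this
    exact this
  -- the transported projection
  let P : V →L[ℝ] V := LinearMap.toContinuousLinearMap (e.conj π)
  have hP : ∀ v : V, P v = e (π (e.symm v)) := by
    intro v
    simp [P, LinearMap.coe_toContinuousLinearMap', LinearEquiv.conj_apply]
  -- the curve of commuting pairs
  have hbr0 : ∀ t : ℝ, β (ψ t (e x)) (ψ t (e y)) = 0 := by
    intro t
    rw [haut, hβ, e.symm_apply_apply, e.symm_apply_apply, hxy, map_zero, map_zero]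
  set G : ℝ → V := fun t => β (P (ψ t (e x))) (P (ψ t (e y))) with hG
  have hG0 : ∀ t : ℝ, G t = 0 := by
    intro t
    have h1 : ⁅e.symm (ψ t (e x)), e.symm (ψ t (e y))⁆ = 0 := by
      have := hbr0 t
      rw [hβ] at this
      exact e.map_eq_zero_iff.mp this
    have h2 := hcomm _ _ h1
    rw [hG]
    simp only [hβ, hP, e.symm_apply_apply]
    rw [h2, map_zero]
  have hGd : HasDerivAt G (β (P (D (e x))) (P (e y)) + β (P (e x)) (P (D (e y)))) 0 := by
    have h1 : HasDerivAt (fun t => P (ψ t (e x))) (P (ψ 0 (D (e x)))) 0 :=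
      P.hasFDerivAt.comp_hasDerivAt 0 (hcurve 0 (e x))
    have h2 : HasDerivAt (fun t => P (ψ t (e y))) (P (ψ 0 (D (e y)))) 0 :=
      P.hasFDerivAt.comp_hasDerivAt 0 (hcurve 0 (e y))
    have := hbil h1 h2
    simpa only [hψ0] using this
  have hGc : HasDerivAt G 0 0 := by
    have : G = fun _ => (0 : V) := funext hG0
    rw [this]
    exact hasDerivAt_const 0 0
  have huniq : β (P (D (e x))) (P (e y)) + β (P (e x)) (P (D (e y))) = 0 :=
    hGd.unique hGc
  -- transport back
  rw [hD, hD, hP, hP, hP, hP] at huniq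
  simp only [e.symm_apply_apply, hβ, e.symm_apply_apply, hπy, map_zero, hπx] at huniq
  simp only [lie_zero, map_zero, zero_add] at huniq
  exact e.map_eq_zero_iff.mp huniq

/-- If `x ∈ h` and `y ∈ m` commute, then `[[x, h], y] = 0`. -/
theorem stmt_7
    (Q : LinearMap.BilinForm ℝ g)
    (hsym : ∀ x y : g, Q x y = Q y x)
    (hpos : ∀ x : g, x ≠ 0 → 0 < Q x x)
    (hinv : ∀ x y z : g, Q ⁅z, x⁆ y + Q x ⁅z, y⁆ = 0)
    (h : LieSubalgebra ℝ g)
    (π : g →ₗ[ℝ] g)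
    (hπh : ∀ x : g, π x ∈ h)
    (hπm : ∀ x : g, ∀ w ∈ h, Q (x - π x) w = 0)
    (hcomm : ∀ u v : g, ⁅u, v⁆ = 0 → ⁅π u, π v⁆ = 0)
    (x y : g) (hxh : x ∈ h) (hym : ∀ w ∈ h, Q y w = 0) (hxy : ⁅x, y⁆ = 0) :
    ∀ h' ∈ h, ⁅⁅x, h'⁆, y⁆ = 0 := by
  intro h' hh'
  have qzero : ∀ c : g, Q c c = 0 → c = 0 := by
    intro c hc
    by_contra hne
    exact absurd hc (ne_of_gt (hpos c hne))
  have hπx : π x = x := by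
    have hmem : x - π x ∈ h := h.toSubmodule.sub_mem hxh (hπh x)
    have h0 : Q (x - π x) (x - π x) = 0 := hπm x (x - π x) hmem
    have := qzero _ h0
    rw [sub_eq_zero] at this
    exact this.symm
  have hπy : π y = 0 := by
    apply qzero
    have h1 : Q (y - π y) (π y) = 0 := hπm y (π y) (hπh y)
    have h2 : Q y (π y) = 0 := hym (π y) (hπh y)
    have h3 : Q (y - π y) (π y) = Q y (π y) - Q (π y) (π y) := by
      rw [map_sub, LinearMap.sub_apply]
    rw [h1, h2] at h3
    linarith
  have KL : ∀ μ : g, ⁅x, π ⁅μ, y⁆⁆ = 0 := key_bracket π hcomm x y hxy hπx hπy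
  set b := ⁅x, h'⁆ with hb
  set w := ⁅h', y⁆ with hw
  set s := ⁅w, y⁆ with hs
  set T := ⁅b, y⁆ with hT
  have hbh : b ∈ h := h.lie_mem hxh hh'
  have hTx : ⁅x, w⁆ = T := by
    rw [hw, leibniz_lie, hxy, lie_zero, add_zero]
  have hyx : ⁅y, x⁆ = 0 := by
    have h0 : -⁅y, x⁆ = ⁅x, y⁆ := lie_skew x y
    rw [hxy] at h0
    exact neg_eq_zero.mp h0
  have hyw : ⁅y, w⁆ = -s := by
    rw [← lie_skew y w, hs]
  have hyT : ⁅y, T⁆ = -⁅x, s⁆ := by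
    rw [← hTx, leibniz_lie, hyx, zero_lie, zero_add, hyw, lie_neg]
  have hQTT : Q T T = - Q b ⁅x, s⁆ := by
    have h1 := hinv b T y
    have h2 : ⁅y, b⁆ = -T := by rw [← lie_skew y b, hT]
    rw [h2] at h1
    have h3 : Q (-T) T = - Q T T := by rw [map_neg, LinearMap.neg_apply]
    rw [h3] at h1
    have h4 : Q b ⁅y, T⁆ = Q T T := by linarith
    rw [hyT, map_neg] at h4
    linarith
  have hsplit : ⁅x, s⁆ = ⁅x, π s⁆ + ⁅x, s - π s⁆ := by
    rw [← lie_add]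
    congr 1
    abel
  have hke : ⁅x, π s⁆ = 0 := KL w
  have hQm : Q b ⁅x, s - π s⁆ = 0 := by
    have h1 := hinv (s - π s) b x
    have h2 : Q (s - π s) ⁅x, b⁆ = 0 := hπm s ⁅x, b⁆ (h.lie_mem hxh hbh)
    have h3 : Q ⁅x, s - π s⁆ b = 0 := by linarith
    rw [hsym]
    exact h3
  have : Q T T = 0 := by
    rw [hQTT, hsplit, hke, zero_add, hQm, neg_zero]
  exact qzero T this
end

section
/- Let g be a finite-dimensional real Lie algebra with an ad-invariant inner product Q, h ⊆ g a simple Lie subalgebra, and m = h^⊥. Suppose that all u, v ∈ g with [u,v] = 0 satisfy [u_h, v_h] = 0. Let y ∈ m be such that [h', y] = 0 for all h' ∈ h, let g' be the ideal of g generated by h and g'' the ideal of g generated by y. Then Q(a, b) = 0 for all a ∈ g', b ∈ g'', and [g', g''] = 0; in particular Q(a, y) = 0 for all a ∈ g'. -/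
variable {g : Type*} [LieRing g] [LieAlgebra ℝ g] [FiniteDimensional ℝ g]

open NormedSpace

set_option maxHeartbeats 1000000
set_option synthInstance.maxHeartbeats 400000

section Flows

variable {E : Type*} [NormedAddCommGroup E] [NormedSpace ℝ E] [CompleteSpace E]

noncomputable def MFaux (β : E →L[ℝ] E →L[ℝ] E) : List (E →L[ℝ] E) → E → E → E
  | [] => fun a b => β a b
  | D :: l => fun a b => MFaux β l (D a) b + MFaux β l a (D b)

lemma expApplyDeriv (D : E →L[ℝ] E) (v : E) (t : ℝ) :
    HasDerivAt (fun s : ℝ => exp (s • D) v) (exp (t • D) (D v)) t := by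
  have h := hasDerivAt_exp_smul_const (𝕂 := ℝ) D t
  have h2 := (ContinuousLinearMap.apply ℝ E v).hasFDerivAt.comp_hasDerivAt t h
  simpa [ContinuousLinearMap.mul_apply, Function.comp_def] using h2

lemma flowKillsBracket (β' : E →L[ℝ] E →L[ℝ] E) (D : E →L[ℝ] E)
    (hD : ∀ u v : E, D (β' u v) = β' (D u) v + β' u (D v))
    (a b : E) (hab : β' a b = 0) (s : ℝ) :
    β' (exp (s • D) a) (exp (s • D) b) = 0 := by
  set τ : ℝ → E := fun s => β' (exp (s • D) a) (exp (s • D) b) with hτdef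
  have hcommute : ∀ t : ℝ, ∀ x : E, exp (t • D) (D x) = D (exp (t • D) x) := by
    intro t x
    have hc : Commute (exp (t • D)) D := ((Commute.refl D).smul_left t).exp_left
    calc exp (t • D) (D x) = (exp (t • D) * D) x := rfl
      _ = (D * exp (t • D)) x := by rw [hc.eq]
      _ = D (exp (t • D) x) := rfl
  have hτd : ∀ t : ℝ, HasDerivAt τ (D (τ t)) t := by
    intro t
    have ha := expApplyDeriv D a t
    have hb := expApplyDeriv D b t
    have h1 : HasDerivAt (fun s : ℝ => β' (exp (s • D) a))
        (β' (exp (t • D) (D a))) t := β'.hasFDerivAt.comp_hasDerivAt t ha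
    have h2 := h1.clm_apply hb
    have h3 : β' (exp (t • D) (D a)) (exp (t • D) b)
        + β' (exp (t • D) a) (exp (t • D) (D b)) = D (τ t) := by
      rw [hcommute t a, hcommute t b, hτdef]
      exact (hD _ _).symm
    rw [h3] at h2
    exact h2
  set ρ : ℝ → E := fun s => exp ((-s) • D) (τ s) with hρdef
  have hρd : ∀ t : ℝ, HasDerivAt ρ 0 t := by
    intro t
    have hE : HasDerivAt (fun s : ℝ => exp ((-s) • D))
        ((-1 : ℝ) • (exp ((-t) • D) * D)) t := by
      have h := hasDerivAt_exp_smul_const (𝕂 := ℝ) D (-t)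
      have hneg : HasDerivAt (fun s : ℝ => -s) (-1 : ℝ) t := (hasDerivAt_id t).neg
      exact h.scomp t hneg
    have h2 := hE.clm_apply (hτd t)
    have h3 : ((-1 : ℝ) • (exp ((-t) • D) * D)) (τ t)
        + exp ((-t) • D) (D (τ t)) = 0 := by
      simp [ContinuousLinearMap.mul_apply]
    rwa [h3] at h2
  have hconst : ∀ t : ℝ, ρ t = ρ 0 := fun t =>
    is_const_of_deriv_eq_zero (fun x => (hρd x).differentiableAt)
      (fun x => (hρd x).deriv) t 0
  have hρ0 : ρ 0 = 0 := by
    simp [hρdef, hτdef, hab]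
  have hzero : exp ((-s) • D) (τ s) = 0 := by
    have := hconst s
    rw [hρ0] at this
    exact this
  have hinv : exp (s • D) * exp ((-s) • D) = 1 := by
    letI : NormedAlgebra ℚ (E →L[ℝ] E) := .restrictScalars ℚ ℝ (E →L[ℝ] E)
    rw [← exp_add_of_commute (((Commute.refl D).smul_left s).smul_right (-s))]
    rw [← add_smul]
    simp
  calc τ s = (exp (s • D) * exp ((-s) • D)) (τ s) := by rw [hinv]; rfl
    _ = exp (s • D) (exp ((-s) • D) (τ s)) := rfl
    _ = 0 := by rw [hzero]; simp

lemma MFauxDeriv (β : E →L[ℝ] E →L[ℝ] E) (l : List (E →L[ℝ] E)) :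
    ∀ (u v : ℝ → E) (a' b' : E) (t : ℝ), HasDerivAt u a' t → HasDerivAt v b' t →
    HasDerivAt (fun s => MFaux β l (u s) (v s)) (MFaux β l a' (v t) + MFaux β l (u t) b') t := by
  induction l with
  | nil =>
    intro u v a' b' t hu hv
    have h1 : HasDerivAt (fun s => β (u s)) (β a') t := β.hasFDerivAt.comp_hasDerivAt t hu
    simpa [MFaux] using h1.clm_apply hv
  | cons D l ih =>
    intro u v a' b' t hu hv
    have hu' : HasDerivAt (fun s => D (u s)) (D a') t := D.hasFDerivAt.comp_hasDerivAt t hu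
    have hv' : HasDerivAt (fun s => D (v s)) (D b') t := D.hasFDerivAt.comp_hasDerivAt t hv
    have h1 := ih (fun s => D (u s)) v (D a') b' t hu' hv
    have h2 := ih u (fun s => D (v s)) a' (D b') t hu hv'
    have h3 := h1.add h2
    have hfun : (fun s => MFaux β (D :: l) (u s) (v s))
        = fun s => MFaux β l (D (u s)) (v s) + MFaux β l (u s) (D (v s)) := rfl
    rw [hfun]
    convert h3 using 1
    · rfl
    simp [MFaux]
    abel

lemma MFauxZero (β β' : E →L[ℝ] E →L[ℝ] E) (hβ : ∀ a b : E, β' a b = 0 → β a b = 0)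
    (l : List (E →L[ℝ] E)) (hl : ∀ D ∈ l, ∀ u v : E, D (β' u v) = β' (D u) v + β' u (D v)) :
    ∀ a b : E, β' a b = 0 → MFaux β l a b = 0 := by
  induction l with
  | nil => intro a b hab; simpa [MFaux] using hβ a b hab
  | cons D l ih =>
    intro a b hab
    have hD := hl D (List.mem_cons_self)
    have hl' : ∀ D' ∈ l, ∀ u v : E, D' (β' u v) = β' (D' u) v + β' u (D' v) :=
      fun D' hD' => hl D' (List.mem_cons_of_mem _ hD')
    have hzero : (fun s : ℝ => MFaux β l (exp (s • D) a) (exp (s • D) b))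
        = fun _ => (0 : E) := by
      funext s
      exact ih hl' _ _ (flowKillsBracket β' D hD a b hab s)
    have h1 : HasDerivAt (fun s : ℝ => MFaux β l (exp (s • D) a) (exp (s • D) b))
        (MFaux β l (D a) b + MFaux β l a (D b)) 0 := by
      have ha := expApplyDeriv D a 0
      have hb := expApplyDeriv D b 0
      have h := MFauxDeriv β l _ _ _ _ 0 ha hb
      simpa [zero_smul, exp_zero] using h
    rw [hzero] at h1
    have h2 : HasDerivAt (fun _ : ℝ => (0 : E)) 0 0 := hasDerivAt_const 0 0
    have h3 := h1.unique h2
    simpa [MFaux] using h3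

end Flows


/-- Step 2: if `h` is simple and `y ∈ m` commutes with all of `h`, then the ideals of `g`
generated by `h` and by `y` are `Q`-orthogonal and commute; in particular the ideal
generated by `h` is orthogonal to `y`. -/
theorem stmt_9
    (Q : LinearMap.BilinForm ℝ g)
    (hsym : ∀ x y : g, Q x y = Q y x)
    (hpos : ∀ x : g, x ≠ 0 → 0 < Q x x)
    (hinv : ∀ x y z : g, Q ⁅z, x⁆ y + Q x ⁅z, y⁆ = 0)
    (h : LieSubalgebra ℝ g)
    (π : g →ₗ[ℝ] g)
    (hπh : ∀ x : g, π x ∈ h)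
    (hπm : ∀ x : g, ∀ w ∈ h, Q (x - π x) w = 0)
    (hsimple : LieAlgebra.IsSimple ℝ h)
    (hcomm : ∀ u v : g, ⁅u, v⁆ = 0 → ⁅π u, π v⁆ = 0)
    (y : g) (hym : ∀ w ∈ h, Q y w = 0) (hy : ∀ h' ∈ h, ⁅h', y⁆ = 0) :
    (∀ a ∈ LieSubmodule.lieSpan ℝ g (h : Set g),
      ∀ b ∈ LieSubmodule.lieSpan ℝ g ({y} : Set g), Q a b = 0 ∧ ⁅a, b⁆ = 0)
    ∧ ∀ a ∈ LieSubmodule.lieSpan ℝ g (h : Set g), Q a y = 0 := by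
  classical
  -- positivity consequences
  have hQ0 : ∀ x : g, Q x x = 0 → x = 0 := by
    intro x hx
    by_contra hne
    exact (hpos x hne).ne' hx
  have hsub : ∀ w ∈ h, π w = w := by
    intro w hw
    have h1 : w - π w ∈ h := h.sub_mem hw (hπh w)
    have h2 := hπm w _ h1
    exact (sub_eq_zero.mp (hQ0 _ h2)).symm
  have hcenter : ∀ c : g, c ∈ h → (∀ w ∈ h, ⁅w, c⁆ = 0) → c = 0 := by
    intro c hc hcen
    have hch : (⟨c, hc⟩ : h) ∈ LieAlgebra.center ℝ h := by
      rw [LieModule.mem_maxTrivSubmodule]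
      intro x
      apply Subtype.ext
      simpa using hcen x.1 x.2
    rcases hsimple.eq_bot_or_eq_top (LieAlgebra.center ℝ h) with hb | ht
    · rw [hb, LieSubmodule.mem_bot] at hch
      exact congrArg Subtype.val hch
    · exact absurd ((LieAlgebra.isLieAbelian_iff_center_eq_top ℝ h).mpr ht)
        hsimple.non_abelian
  -- normed structure coming from Q
  let core : InnerProductSpace.Core ℝ g :=
    { inner := fun x y => Q x y
      conj_inner_symm := by intro x y; simpa using hsym y x
      re_inner_nonneg := by
        intro x
        rcases eq_or_ne x 0 with rfl | hx
        · simp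
        · simpa using (hpos x hx).le
      add_left := by intro x y z; simp
      smul_left := by intro x y r; simp
      definite := fun x hx => hQ0 x (by simpa using hx) }
  letI : NormedAddCommGroup g := core.toNormedAddCommGroup
  letI : InnerProductSpace ℝ g := InnerProductSpace.ofCore core.toCore
  -- continuous linear maps
  let adC : g → (g →L[ℝ] g) := fun z => LinearMap.toContinuousLinearMap (LieAlgebra.ad ℝ g z)
  have hadC : ∀ z v : g, adC z v = ⁅z, v⁆ := fun z v => rfl
  let brkL : g →ₗ[ℝ] (g →L[ℝ] g) :=
    { toFun := fun u => adC u
      map_add' := by intro u v; ext w; simp [hadC, add_lie]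
      map_smul' := by intro r u; ext w; simp [hadC, smul_lie] }
  let β' : g →L[ℝ] g →L[ℝ] g := LinearMap.toContinuousLinearMap brkL
  have hβ'app : ∀ a b : g, β' a b = ⁅a, b⁆ := fun a b => rfl
  let pbL : g →ₗ[ℝ] (g →L[ℝ] g) :=
    { toFun := fun u => LinearMap.toContinuousLinearMap ((LieAlgebra.ad ℝ g (π u)) ∘ₗ π)
      map_add' := by
        intro u v; ext w
        simp [LinearMap.comp_apply, map_add, add_lie]
      map_smul' := by
        intro r u; ext w
        simp [LinearMap.comp_apply, map_smul, smul_lie] }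
  let β : g →L[ℝ] g →L[ℝ] g := LinearMap.toContinuousLinearMap pbL
  have hβapp : ∀ a b : g, β a b = ⁅π a, π b⁆ := fun a b => rfl
  -- the master identity from the flow argument
  have key : ∀ (l : List g) (a b : g), ⁅a, b⁆ = 0 → MFaux β (l.map adC) a b = 0 := by
    intro l a b hab
    refine MFauxZero β β' (fun a b hab0 => ?_) (l.map adC) ?_ a b ?_
    · rw [hβapp]
      exact hcomm a b (by rw [← hβ'app a b]; exact hab0)
    · intro D hD
      rcases List.mem_map.mp hD with ⟨z, _, rfl⟩
      intro u v
      show ⁅z, ⁅u, v⁆⁆ = ⁅⁅z, u⁆, v⁆ + ⁅u, ⁅z, v⁆⁆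
      exact leibniz_lie z u v
    · rw [hβ'app]; exact hab
  -- iterated bracket words
  let Dw : List g → g → g := fun l v => l.foldl (fun v z => ⁅z, v⁆) v
  have hDw_cons : ∀ (z : g) (l : List g) (v : g), Dw (z :: l) v = Dw l ⁅z, v⁆ :=
    fun _ _ _ => rfl
  have hDw_app : ∀ (l : List g) (z v : g), Dw (l ++ [z]) v = ⁅z, Dw l v⁆ := by
    intro l z v
    simp [Dw, List.foldl_append]
  have SUB : ∀ l : List g, ∀ a v : g,
      (∀ m : List g, m.length < l.length → π (Dw m v) = 0) →
      MFaux β (l.map adC) a v = ⁅π a, π (Dw l v)⁆ := by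
    intro l
    induction l with
    | nil => intro a v _; exact hβapp a v
    | cons z l ih =>
      intro a v hv
      have hsplit : MFaux β ((z :: l).map adC) a v
          = MFaux β (l.map adC) ⁅z, a⁆ v + MFaux β (l.map adC) a ⁅z, v⁆ := rfl
      have h3 : π (Dw l v) = 0 := hv l (Nat.lt_succ_self _)
      have h2 := ih ⁅z, a⁆ v (fun m hm => hv m (Nat.lt_succ_of_lt hm))
      have h4 := ih a ⁅z, v⁆ (fun m hm => hv (z :: m) (Nat.succ_lt_succ hm))
      rw [hsplit, h2, h4, h3, lie_zero, zero_add, ← hDw_cons]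
  have Fn : ∀ l : List g, π (Dw l y) = 0 := by
    have main : ∀ n : ℕ, ∀ l : List g, l.length = n → π (Dw l y) = 0 := by
      intro n
      induction n using Nat.strong_induction_on with
      | _ n ih =>
        intro l hl
        have hsubhyp : ∀ m : List g, m.length < l.length → π (Dw m y) = 0 := by
          intro m hm
          exact ih m.length (hl ▸ hm) m rfl
        have hzero : ∀ w ∈ h, ⁅w, π (Dw l y)⁆ = 0 := by
          intro w hw
          have h1 := key l w y (hy w hw)
          rw [SUB l w y hsubhyp, hsub w hw] at h1
          exact h1
        exact hcenter _ (hπh _) hzero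
    exact fun l => main l.length l rfl
  -- the ideal generated by y is contained in the kernel of π
  have hπspan : ∀ b ∈ LieSubmodule.lieSpan ℝ g ({y} : Set g), π b = 0 := by
    have hUlie : ∀ (z x : g), x ∈ Submodule.span ℝ {x : g | ∃ l : List g, Dw l y = x} →
        ⁅z, x⁆ ∈ Submodule.span ℝ {x : g | ∃ l : List g, Dw l y = x} := by
      intro z x hx
      induction hx using Submodule.span_induction with
      | mem w hw =>
        rcases hw with ⟨l, rfl⟩
        exact Submodule.subset_span ⟨l ++ [z], hDw_app l z y⟩
      | zero => simpa using Submodule.zero_mem _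
      | add u v _ _ hu hv => rw [lie_add]; exact Submodule.add_mem _ hu hv
      | smul r u _ hu => rw [lie_smul]; exact Submodule.smul_mem _ r hu
    let U : LieSubmodule ℝ g g :=
      { toSubmodule := Submodule.span ℝ {x : g | ∃ l : List g, Dw l y = x}
        lie_mem := fun {z x} hx => hUlie z x hx }
    have hle : LieSubmodule.lieSpan ℝ g ({y} : Set g) ≤ U := by
      apply LieSubmodule.lieSpan_le.mpr
      intro x hx
      rw [Set.mem_singleton_iff] at hx
      subst hx
      exact Submodule.subset_span ⟨[], rfl⟩
    intro b hb
    have hbU : b ∈ Submodule.span ℝ {x : g | ∃ l : List g, Dw l y = x} := hle hb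
    clear hb
    induction hbU using Submodule.span_induction with
    | mem w hw => rcases hw with ⟨l, rfl⟩; exact Fn l
    | zero => simp
    | add u v _ _ hu hv => rw [map_add, hu, hv, add_zero]
    | smul r u _ hu => rw [map_smul, hu, smul_zero]
  have horth : ∀ b ∈ LieSubmodule.lieSpan ℝ g ({y} : Set g), ∀ w ∈ h, Q b w = 0 := by
    intro b hb w hw
    have h1 := hπm b w hw
    rwa [hπspan b hb, sub_zero] at h1
  -- the orthogonal complement of the ideal generated by y is an ideal
  let KS : Submodule ℝ g :=
    { carrier := {a : g | ∀ b ∈ LieSubmodule.lieSpan ℝ g ({y} : Set g), Q a b = 0}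
      add_mem' := by
        intro a a' ha ha' b hb
        simp only [map_add, LinearMap.add_apply, ha b hb, ha' b hb, add_zero]
      zero_mem' := by intro b hb; simp
      smul_mem' := by
        intro r a ha b hb
        simp only [map_smul, LinearMap.smul_apply, ha b hb, smul_zero] }
  let K : LieSubmodule ℝ g g :=
    { toSubmodule := KS
      lie_mem := by
        intro z a ha b hb
        have h1 := hinv a b z
        have h2 : ⁅z, b⁆ ∈ LieSubmodule.lieSpan ℝ g ({y} : Set g) :=
          (LieSubmodule.lieSpan ℝ g ({y} : Set g)).lie_mem hb
        have h3 := ha ⁅z, b⁆ h2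
        linarith }
  have hhsubK : (h : Set g) ⊆ K := by
    intro w hw b hb
    rw [hsym w b]
    exact horth b hb w hw
  have hg'K : LieSubmodule.lieSpan ℝ g (h : Set g) ≤ K := LieSubmodule.lieSpan_le.mpr hhsubK
  refine ⟨?_, ?_⟩
  · intro a ha b hb
    refine ⟨hg'K ha b hb, ?_⟩
    have hm1 : ⁅a, b⁆ ∈ LieSubmodule.lieSpan ℝ g ({y} : Set g) :=
      (LieSubmodule.lieSpan ℝ g ({y} : Set g)).lie_mem hb
    have hm2 : ⁅a, b⁆ ∈ LieSubmodule.lieSpan ℝ g (h : Set g) := by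
      have hba : ⁅b, a⁆ ∈ LieSubmodule.lieSpan ℝ g (h : Set g) :=
        (LieSubmodule.lieSpan ℝ g (h : Set g)).lie_mem ha
      have h4 : ⁅a, b⁆ = -⁅b, a⁆ := (lie_skew a b).symm
      rw [h4]
      exact neg_mem hba
    exact hQ0 _ (hg'K hm2 ⁅a, b⁆ hm1)
  · intro a ha
    exact hg'K ha y (LieSubmodule.subset_lieSpan rfl)
end

section
/- Let g be a finite-dimensional real Lie algebra with an ad-invariant inner product Q, h ⊆ g a simple Lie subalgebra, and m = h^⊥. Suppose that all u, v ∈ g with [u,v] = 0 satisfy [u_h, v_h] = 0. Let y ∈ m satisfy [h', y] = 0 for all h' ∈ h. Then Q([a, [b, y]], h') = 0 for all a, b ∈ g and all h' ∈ h; in particular Q([a, [a, y]], h') = 0 for all a ∈ m and h' ∈ h. -/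
set_option maxHeartbeats 1000000
set_option synthInstance.maxHeartbeats 400000

open NormedSpace

section Aux
variable {V : Type*} [NormedAddCommGroup V] [NormedSpace ℝ V] [CompleteSpace V]

lemma aux_hasDerivAt_expD (D : V →L[ℝ] V) (w : V) (s : ℝ) :
    HasDerivAt (fun t : ℝ => exp (t • D) w) (D (exp (s • D) w)) s := by
  have h1 := hasDerivAt_exp_smul_const' (𝕂 := ℝ) D s
  have h2 := h1.clm_apply (hasDerivAt_const s w)
  simpa using h2

omit [CompleteSpace V] in
lemma aux_hasDerivAt_B (B : V →L[ℝ] V →L[ℝ] V) {c d : ℝ → V} {c' d' : V} {s : ℝ}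
    (hc : HasDerivAt c c' s) (hd : HasDerivAt d d' s) :
    HasDerivAt (fun t => B (c t) (d t)) (B c' (d s) + B (c s) d') s := by
  have h2 : HasDerivAt (fun t => B (c t)) (B c') s :=
    B.hasFDerivAt.comp_hasDerivAt s hc
  exact h2.clm_apply hd

/-- `exp (s • D)` is an automorphism for the bilinear product `B` when `D` is a
`B`-derivation. -/
lemma aux_exp_hom (B : V →L[ℝ] V →L[ℝ] V) (D : V →L[ℝ] V)
    (hD : ∀ u v : V, D (B u v) = B (D u) v + B u (D v)) (u v : V) (s : ℝ) :
    B (exp (s • D) u) (exp (s • D) v) = exp (s • D) (B u v) := by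
  set Φ : ℝ → V := fun t => exp ((-t) • D) (B (exp (t • D) u) (exp (t • D) v)) with hΦ
  have hcomm : ∀ t : ℝ, Commute D (exp ((-t) • D)) :=
    fun t => ((Commute.refl D).smul_right (-t)).exp_right
  have hderiv : ∀ t : ℝ, HasDerivAt Φ 0 t := by
    intro t
    have hA : HasDerivAt (fun t : ℝ => exp ((-t) • D)) (-(D * exp ((-t) • D))) t := by
      have h1 := hasDerivAt_exp_smul_const' (𝕂 := ℝ) D (-t)
      have h2 : HasDerivAt (fun s : ℝ => -s) (-1 : ℝ) t := (hasDerivAt_id t).neg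
      have h3 := h1.scomp t h2
      simpa [Function.comp_def, neg_smul] using h3
    have hcu := aux_hasDerivAt_expD D u t
    have hcv := aux_hasDerivAt_expD D v t
    have hc : HasDerivAt (fun t => B (exp (t • D) u) (exp (t • D) v))
        (D (B (exp (t • D) u) (exp (t • D) v))) t := by
      have := aux_hasDerivAt_B B hcu hcv
      rwa [← hD] at this
    have h4 := hA.clm_apply hc
    have h5 : (-(D * exp ((-t) • D))) (B (exp (t • D) u) (exp (t • D) v))
        + exp ((-t) • D) (D (B (exp (t • D) u) (exp (t • D) v))) = 0 := by
      rw [ContinuousLinearMap.neg_apply, (hcomm t).eq, ContinuousLinearMap.mul_apply]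
      abel
    rwa [h5] at h4
  have hconst : Φ s = Φ 0 :=
    is_const_of_deriv_eq_zero (fun t => (hderiv t).differentiableAt)
      (fun t => (hderiv t).deriv) s 0
  have h0 : Φ 0 = B u v := by
    simp [hΦ, exp_zero]
  have hinv : exp (s • D) (exp ((-s) • D) (B (exp (s • D) u) (exp (s • D) v)))
      = B (exp (s • D) u) (exp (s • D) v) := by
    letI : NormedAlgebra ℚ (V →L[ℝ] V) := NormedAlgebra.restrictScalars ℚ ℝ (V →L[ℝ] V)
    rw [← ContinuousLinearMap.mul_apply,
      ← exp_add_of_commute (((Commute.refl D).smul_left s).smul_right (-s))]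
    simp [exp_zero]
  calc B (exp (s • D) u) (exp (s • D) v) = exp (s • D) (Φ s) := hinv.symm
    _ = exp (s • D) (B u v) := by rw [hconst, h0]

/-- The second-derivative-at-zero identity extracted from a vanishing family. -/
lemma aux_second (B : V →L[ℝ] V →L[ℝ] V) (D P : V →L[ℝ] V) (u v : V)
    (hzero : ∀ s : ℝ, B (P (exp (s • D) u)) (P (exp (s • D) v)) = 0) :
    B (P (D (D u))) (P v) + B (P (D u)) (P (D v))
      + (B (P (D u)) (P (D v)) + B (P u) (P (D (D v)))) = 0 := by
  set F : ℝ → V := fun s => B (P (exp (s • D) u)) (P (exp (s • D) v)) with hF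
  set G : ℝ → V := fun s => B (P (D (exp (s • D) u))) (P (exp (s • D) v))
      + B (P (exp (s • D) u)) (P (D (exp (s • D) v))) with hG
  have hcurve : ∀ (w : V) (s : ℝ),
      HasDerivAt (fun t : ℝ => P (exp (t • D) w)) (P (D (exp (s • D) w))) s :=
    fun w s => P.hasFDerivAt.comp_hasDerivAt s (aux_hasDerivAt_expD D w s)
  have hcurve2 : ∀ (w : V) (s : ℝ),
      HasDerivAt (fun t : ℝ => P (D (exp (t • D) w))) (P (D (D (exp (s • D) w)))) s :=
    fun w s => (P.comp D).hasFDerivAt.comp_hasDerivAt s (aux_hasDerivAt_expD D w s)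
  have hFG : ∀ s, HasDerivAt F (G s) s :=
    fun s => aux_hasDerivAt_B B (hcurve u s) (hcurve v s)
  have hGzero : ∀ s, G s = 0 := by
    intro s
    have h1 : HasDerivAt F 0 s := by
      have : F = fun _ => (0 : V) := funext hzero
      rw [this]; exact hasDerivAt_const s 0
    exact ((hFG s).unique h1)
  have hGH : ∀ s, HasDerivAt G
      (B (P (D (D (exp (s • D) u)))) (P (exp (s • D) v))
        + B (P (D (exp (s • D) u))) (P (D (exp (s • D) v)))
        + (B (P (D (exp (s • D) u))) (P (D (exp (s • D) v)))
        + B (P (exp (s • D) u)) (P (D (D (exp (s • D) v)))))) s := by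
    intro s
    exact (aux_hasDerivAt_B B (hcurve2 u s) (hcurve v s)).add
      (aux_hasDerivAt_B B (hcurve u s) (hcurve2 v s))
  have h2 : HasDerivAt G 0 0 := by
    have : G = fun _ => (0 : V) := funext hGzero
    rw [this]; exact hasDerivAt_const 0 0
  have h3 := (hGH 0).unique h2
  simpa [exp_zero] using h3

end Aux

variable {g : Type*} [LieRing g] [LieAlgebra ℝ g] [FiniteDimensional ℝ g]

/-- If `h` is simple and `y ∈ m` commutes with all of `h`, then `Q([a,[b,y]], h) = 0`
for all `a, b ∈ g`; in particular `Q([a,[a,y]], h) = 0` for all `a ∈ m`. -/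
theorem stmt_13
    (Q : LinearMap.BilinForm ℝ g)
    (hsym : ∀ x y : g, Q x y = Q y x)
    (hpos : ∀ x : g, x ≠ 0 → 0 < Q x x)
    (hinv : ∀ x y z : g, Q ⁅z, x⁆ y + Q x ⁅z, y⁆ = 0)
    (h : LieSubalgebra ℝ g)
    (π : g →ₗ[ℝ] g)
    (hπh : ∀ x : g, π x ∈ h)
    (hπm : ∀ x : g, ∀ w ∈ h, Q (x - π x) w = 0)
    (hsimple : LieAlgebra.IsSimple ℝ h)
    (hcomm : ∀ u v : g, ⁅u, v⁆ = 0 → ⁅π u, π v⁆ = 0)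
    (y : g) (hym : ∀ w ∈ h, Q y w = 0) (hy : ∀ h' ∈ h, ⁅h', y⁆ = 0) :
    (∀ a b : g, ∀ h' ∈ h, Q ⁅a, ⁅b, y⁆⁆ h' = 0)
    ∧ ∀ a : g, (∀ w ∈ h, Q a w = 0) → ∀ h' ∈ h, Q ⁅a, ⁅a, y⁆⁆ h' = 0 := by
  haveI := hsimple
  -- `π` kills vectors orthogonal to `h`
  have hπ0 : ∀ x : g, (∀ w ∈ h, Q x w = 0) → π x = 0 := by
    intro x hx
    by_contra hne
    have e1 := hπm x (π x) (hπh x)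
    have e2 := hx (π x) (hπh x)
    have e3 : Q (π x) (π x) = 0 := by
      have : Q (x - π x) (π x) = Q x (π x) - Q (π x) (π x) := by
        simp [map_sub]
      rw [this, e2] at e1; linarith
    exact (hpos _ hne).ne' e3
  have hπy : π y = 0 := hπ0 y hym
  -- brackets with `y` are orthogonal to `h`
  have hby : ∀ (c : g), ∀ w ∈ h, Q ⁅c, y⁆ w = 0 := by
    intro c w hw
    have h1 := hinv c w y
    have h2 : ⁅y, w⁆ = (0 : g) := by
      rw [← lie_skew, hy w hw, neg_zero]
    rw [h2, map_zero] at h1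
    have h3 : Q ⁅y, c⁆ w = 0 := by linarith
    rw [← lie_skew, map_neg]
    simpa using h3
  have hπby : ∀ c : g, π ⁅c, y⁆ = 0 := fun c => hπ0 _ (hby c)
  -- `π` is the identity on `h`
  have hπid : ∀ w ∈ h, π w = w := by
    intro w hw
    have hmem : w - π w ∈ h := sub_mem hw (hπh w)
    have e1 := hπm w _ hmem
    by_contra hne
    have hne' : w - π w ≠ 0 := fun h0 => hne (by rw [sub_eq_zero] at h0; exact h0.symm)
    exact (hpos _ hne').ne' e1
  -- the center of `h` is trivial
  have hcenter : ∀ z : g, z ∈ h → (∀ w ∈ h, ⁅z, w⁆ = 0) → z = 0 := by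
    intro z hz hzw
    have hmem : (⟨z, hz⟩ : h) ∈ LieAlgebra.center ℝ h := by
      rw [LieAlgebra.center, LieModule.mem_maxTrivSubmodule]
      intro w
      apply Subtype.ext
      have hco : (↑(⁅w, (⟨z, hz⟩ : h)⁆ : h) : g) = ⁅(w : g), z⁆ := rfl
      rw [hco]
      rw [← lie_skew, hzw _ w.2, neg_zero]
      simp
    rw [LieAlgebra.center_eq_bot ℝ h, LieSubmodule.mem_bot] at hmem
    exact congrArg Subtype.val hmem
  -- set up the analytic machinery
  letI : NormedAddCommGroup g :=
    NormedAddCommGroup.induced g (Fin (Module.finrank ℝ g) → ℝ)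
      (Module.finBasis ℝ g).equivFun (Module.finBasis ℝ g).equivFun.injective
  letI : NormedSpace ℝ g :=
    NormedSpace.induced ℝ g (Fin (Module.finrank ℝ g) → ℝ) (Module.finBasis ℝ g).equivFun
  haveI : CompleteSpace g := FiniteDimensional.complete ℝ g
  let P : g →L[ℝ] g := LinearMap.toContinuousLinearMap π
  let L1 : g →ₗ[ℝ] (g →L[ℝ] g) :=
    { toFun := fun a => LinearMap.toContinuousLinearMap ((LieAlgebra.ad ℝ g) a)
      map_add' := by
        intro a b; ext w
        simp [LieAlgebra.ad_apply, add_lie]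
      map_smul' := by
        intro r a; ext w
        simp [LieAlgebra.ad_apply, smul_lie] }
  let B : g →L[ℝ] (g →L[ℝ] g) := LinearMap.toContinuousLinearMap L1
  have hBapp : ∀ a b : g, B a b = ⁅a, b⁆ := fun a b => rfl
  have hPapp : ∀ a : g, P a = π a := fun a => rfl
  -- the key pointwise identity
  have key : ∀ x : g, π ⁅x, ⁅x, y⁆⁆ = 0 := by
    intro x
    apply hcenter _ (hπh _)
    intro t₀ ht₀
    let D : g →L[ℝ] g := LinearMap.toContinuousLinearMap ((LieAlgebra.ad ℝ g) x)
    have hDapp : ∀ w : g, D w = ⁅x, w⁆ := fun w => rfl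
    have hD : ∀ u v : g, D (B u v) = B (D u) v + B u (D v) := by
      intro u v
      rw [hBapp, hDapp, hBapp, hBapp, hDapp, hDapp]
      exact leibniz_lie x u v
    have hzero : ∀ s : ℝ, B (P (exp (s • D) y)) (P (exp (s • D) t₀)) = 0 := by
      intro s
      have hbr : ⁅exp (s • D) y, exp (s • D) t₀⁆ = (0 : g) := by
        have h1 := aux_exp_hom B D hD y t₀ s
        rw [hBapp] at h1
        have h2 : ⁅y, t₀⁆ = (0 : g) := by
          rw [← lie_skew, hy t₀ ht₀, neg_zero]
        rw [hBapp, h2, map_zero] at h1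
        exact h1
      have := hcomm _ _ hbr
      rw [hBapp, hPapp, hPapp]
      exact this
    have h2 := aux_second B D P y t₀ hzero
    have e1 : P (D y) = 0 := by rw [hPapp, hDapp, hπby]
    have e2 : P y = 0 := by rw [hPapp, hπy]
    rw [e1, e2] at h2
    simp only [map_zero, ContinuousLinearMap.zero_apply, add_zero, zero_add] at h2
    -- h2 : B (P (D (D y))) (P t₀) = 0
    have e3 : P (D (D y)) = π ⁅x, ⁅x, y⁆⁆ := by rw [hPapp, hDapp, hDapp]
    have e4 : P t₀ = t₀ := by rw [hPapp, hπid t₀ ht₀]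
    rw [hBapp, e3, e4] at h2
    exact h2
  -- polarize
  have keyab : ∀ a b : g, π ⁅a, ⁅b, y⁆⁆ = 0 := by
    intro a b
    have h1 := key (a + b)
    have h2 := key a
    have h3 := key b
    have hexp : ⁅a + b, ⁅a + b, y⁆⁆
        = ⁅a, ⁅a, y⁆⁆ + ⁅b, ⁅b, y⁆⁆ + (⁅a, ⁅b, y⁆⁆ + ⁅b, ⁅a, y⁆⁆) := by
      simp only [add_lie, lie_add]
      abel
    rw [hexp] at h1
    have hsum : π ⁅a, ⁅b, y⁆⁆ + π ⁅b, ⁅a, y⁆⁆ = 0 := by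
      simp only [map_add, h2, h3] at h1
      simpa using h1
    have heq : π ⁅a, ⁅b, y⁆⁆ = π ⁅b, ⁅a, y⁆⁆ := by
      have hl : ⁅a, ⁅b, y⁆⁆ = ⁅⁅a, b⁆, y⁆ + ⁅b, ⁅a, y⁆⁆ := leibniz_lie a b y
      rw [hl, map_add, hπby]
      simp
    rw [heq] at hsum
    have : π ⁅b, ⁅a, y⁆⁆ = 0 := by
      have h5 : (2 : ℝ) • π ⁅b, ⁅a, y⁆⁆ = 0 := by
        rw [two_smul]; exact hsum
      rcases smul_eq_zero.mp h5 with h6 | h6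
      · norm_num at h6
      · exact h6
    rw [heq, this]
  -- conclude
  have main : ∀ a b : g, ∀ h' ∈ h, Q ⁅a, ⁅b, y⁆⁆ h' = 0 := by
    intro a b h' hh'
    have h1 := hπm ⁅a, ⁅b, y⁆⁆ h' hh'
    rw [keyab, sub_zero] at h1
    exact h1
  exact ⟨main, fun a _ h' hh' => main a a h' hh'⟩
end

section
/- Let V be a nonzero finite-dimensional real inner product space and let A, B be commuting skew-adjoint endomorphisms of V. Then there exist real numbers s, t, not both zero, such that the endomorphism sA + tB has a nonzero kernel. -/
open scoped RealInnerProductSpace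

/-- Two commuting skew-adjoint endomorphisms of a nonzero finite-dimensional real inner
product space admit a nontrivial linear combination with nonzero kernel. -/
theorem stmt_15 {V : Type*} [NormedAddCommGroup V] [InnerProductSpace ℝ V]
    [FiniteDimensional ℝ V] [Nontrivial V]
    (A B : V →ₗ[ℝ] V)
    (hA : ∀ v w : V, ⟪A v, w⟫ = -⟪v, A w⟫)
    (hB : ∀ v w : V, ⟪B v, w⟫ = -⟪v, B w⟫)
    (hAB : ∀ v : V, A (B v) = B (A v)) :
    ∃ s t : ℝ, ¬(s = 0 ∧ t = 0) ∧ ∃ v : V, v ≠ 0 ∧ (s • A + t • B) v = 0 := by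
  by_cases hker : ∃ v : V, v ≠ 0 ∧ A v = 0
  · obtain ⟨v, hv, hAv⟩ := hker
    exact ⟨1, 0, by simp, v, hv, by simp [hAv]⟩
  · -- A is injective hence a unit
    have hinj : LinearMap.ker A = ⊥ := by
      rw [LinearMap.ker_eq_bot']
      intro v hv
      by_contra h
      exact hker ⟨v, h, hv⟩
    have hU : IsUnit A := (LinearMap.isUnit_iff_ker_eq_bot A).2 hinj
    obtain ⟨u, hu⟩ := hU
    set A' : V →ₗ[ℝ] V := ((u⁻¹ : (V →ₗ[ℝ] V)ˣ) : V →ₗ[ℝ] V) with hA'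
    have hA'A : ∀ v, A' (A v) = v := by
      intro v
      have : (A' * A) v = v := by
        rw [hA', ← hu, Units.inv_mul]; rfl
      simpa using this
    have hAA' : ∀ v, A (A' v) = v := by
      intro v
      have : (A * A') v = v := by
        rw [hA', ← hu, Units.mul_inv]; rfl
      simpa using this
    set D : V →ₗ[ℝ] V := A' ∘ₗ B with hD
    have hAD : ∀ v, A (D v) = B v := fun v => hAA' (B v)
    have hDA : ∀ v, D (A v) = B v := by
      intro v
      have : D (A v) = A' (B (A v)) := rfl
      rw [this, ← hAB, hA'A]
    have hsurj : Function.Surjective A := by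
      intro w; exact ⟨A' w, hAA' w⟩
    have hsym : D.IsSymmetric := by
      intro v w
      obtain ⟨u, rfl⟩ := hsurj w
      calc ⟪D v, A u⟫ = -⟪A (D v), u⟫ := by rw [hA]; ring
        _ = -⟪B v, u⟫ := by rw [hAD]
        _ = ⟪v, B u⟫ := by rw [hB]; ring
        _ = ⟪v, D (A u)⟫ := by rw [hDA]
    have hev := hsym.hasEigenvalue_iSup_of_finiteDimensional
    set μ := (⨆ x : { x : V // x ≠ 0 }, ContinuousLinearMap.rayleighQuotient
      (LinearMap.toContinuousLinearMap D) x : ℝ)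
    obtain ⟨v, hvec⟩ := hev.exists_hasEigenvector
    have hv0 : v ≠ 0 := hvec.2
    have hDv : D v = μ • v := hvec.apply_eq_smul
    refine ⟨μ, -1, by simp, v, hv0, ?_⟩
    have hBv : B v = μ • A v := by
      rw [← hAD v, hDv, map_smul]
    simp [hBv]
end
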